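/- Let G : SimpleGraph V and G' : SimpleGraph V' be locally finite simple graphs (each vertex has a finite neighbour set, with neighborFinset available), let S be a type of local states, and let F : S → Multiset S → S. Define one synchronous round on G by stepG x v = F (x v) (Multiset.map x (G.neighborFinset v).val), and analogously stepG' on G'. Suppose φ : V → V' is a local isomorphism (graph covering map): for every v : V, φ maps the neighbour set of v in G bijectively onto the neighbour set of φ v in G' (Set.BijOn φ (G.neighborSet v) (G'.neighborSet (φ v))). Then for every y : V' → S and every k : ℕ, stepG^[k] (y ∘ φ) = (stepG'^[k] y) ∘ φ. -/
import Mathlib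


/-- One synchronous round on a locally finite graph `G`: every node updates its state
as a function of its own state and the multiset of its neighbours' states. -/
def coverStep {V S : Type*} (G : SimpleGraph V) [G.LocallyFinite]
    (F : S → Multiset S → S) (x : V → S) (v : V) : S :=
  F (x v) (Multiset.map x (G.neighborFinset v).val)

lemma coverStep_comm {V V' S : Type*} (G : SimpleGraph V) (G' : SimpleGraph V')
    [G.LocallyFinite] [G'.LocallyFinite] (F : S → Multiset S → S) (φ : V → V')
    (hφ : ∀ v : V, Set.BijOn φ (G.neighborSet v) (G'.neighborSet (φ v)))
    (y : V' → S) : coverStep G F (y ∘ φ) = (coverStep G' F y) ∘ φ := by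
  classical
  funext v
  have himg : (G.neighborFinset v).image φ = G'.neighborFinset (φ v) := by
    apply Finset.coe_injective
    rw [Finset.coe_image]
    simp only [SimpleGraph.neighborFinset, Set.coe_toFinset]
    exact (hφ v).image_eq
  have hval : (G.neighborFinset v).val.map φ = (G'.neighborFinset (φ v)).val := by
    have hnd : ((G.neighborFinset v).val.map φ).Nodup := by
      refine Multiset.Nodup.map_on ?_ (G.neighborFinset v).nodup
      intro a ha b hb hab
      exact (hφ v).injOn (by simpa using ha) (by simpa using hb) hab
    have : ⟨(G.neighborFinset v).val.map φ, hnd⟩ = G'.neighborFinset (φ v) := by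
      rw [← himg]
      apply Finset.eq_of_veq
      simp [Finset.image, Multiset.dedup_eq_self.mpr hnd]
    exact congrArg Finset.val this
  simp only [coverStep, Function.comp_apply, ← hval, Multiset.map_map]

theorem stmt_5 {V V' S : Type*} (G : SimpleGraph V) (G' : SimpleGraph V')
    [G.LocallyFinite] [G'.LocallyFinite] (F : S → Multiset S → S) (φ : V → V')
    (hφ : ∀ v : V, Set.BijOn φ (G.neighborSet v) (G'.neighborSet (φ v))) :
    ∀ (y : V' → S) (k : ℕ),
      (coverStep G F)^[k] (y ∘ φ) = ((coverStep G' F)^[k] y) ∘ φ := by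
  intro y k
  induction k generalizing y with
  | zero => rfl
  | succ k ih =>
    rw [Function.iterate_succ_apply, Function.iterate_succ_apply,
      coverStep_comm G G' F φ hφ y, ih]
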